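/- Let X be a real Banach space with a countably 1-norming M-basis {x_α}_{α<θ}, where θ is an uncountable cardinal. Then there exists an injective map φ: θ → θ such that {x_{φ(α)}}_{α<θ} is a monotone transfinite basic sequence; moreover, if θ is regular, then φ can be chosen to be strictly increasing. In particular, every nonseparable Plichko space contains a monotone basic sequence of length ω₁. -/

import Mathlib

open Cardinal Ordinal Set Pointwise

universe u

noncomputable def closedSpan {X : Type u} [SeminormedAddCommGroup X] [NormedSpace ℝ X]
    (s : Set X) : Submodule ℝ X :=
  (Submodule.span ℝ s).topologicalClosure

/-- transfinite basic sequence with constant C; monotone when `C = 1` -/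
def IsBasicSeqWithConst {X : Type u} [SeminormedAddCommGroup X] [NormedSpace ℝ X]
    (x : Ordinal.{u} → X) (θ : Ordinal.{u}) (C : ℝ) : Prop :=
  1 ≤ C ∧ (∀ α < θ, x α ≠ 0) ∧
  ∀ lam < θ, ∀ y ∈ closedSpan (x '' {α | α < lam}),
    ∀ z ∈ closedSpan (x '' {α | lam ≤ α ∧ α < θ}), ‖y‖ ≤ C * ‖y + z‖

namespace Stmt15Aux

variable {X : Type u} [NormedAddCommGroup X] [NormedSpace ℝ X]

/-- support of a functional on the basis below `θo` -/
def supp (x : Ordinal.{u} → X) (θo : Ordinal.{u}) (g : X →L[ℝ] ℝ) : Set Ordinal.{u} :=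
  {α | α < θo ∧ g (x α) ≠ 0}

/-- forbidden ordinals at stage `γ` -/
def Forb (x : Ordinal.{u} → X) (θo : Ordinal.{u}) (ν : Set X → Set (X →L[ℝ] ℝ))
    (ψ : Ordinal.{u} → Ordinal.{u}) (γ : Ordinal.{u}) : Set Ordinal.{u} :=
  ψ '' Set.Iio γ ∪
    ⋃ F ∈ {F : Finset Ordinal.{u} | ↑F ⊆ Set.Iio γ},
      ⋃ g ∈ ν ((fun β => x (ψ β)) '' (F : Set Ordinal.{u})), supp x θo g

theorem Forb_congr {x : Ordinal.{u} → X} {θo : Ordinal.{u}} {ν : Set X → Set (X →L[ℝ] ℝ)}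
    {ψ ψ' : Ordinal.{u} → Ordinal.{u}} {γ : Ordinal.{u}}
    (h : Set.EqOn ψ ψ' (Set.Iio γ)) : Forb x θo ν ψ γ = Forb x θo ν ψ' γ := by
  unfold Forb
  congr 1
  · exact Set.image_congr h
  · refine Set.iUnion₂_congr fun F hF => ?_
    have himg : (fun β => x (ψ β)) '' (F : Set Ordinal.{u})
        = (fun β => x (ψ' β)) '' (F : Set Ordinal.{u}) :=
      Set.image_congr fun a ha => by rw [h (hF ha)]
    rw [himg]

theorem mk_Forb_le {x : Ordinal.{u} → X} {θo : Ordinal.{u}} {ν : Set X → Set (X →L[ℝ] ℝ)}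
    (hν : ∀ s, (ν s).Countable) (hsupp : ∀ s, ∀ g ∈ ν s, (supp x θo g).Countable)
    (ψ : Ordinal.{u} → Ordinal.{u}) (γ : Ordinal.{u}) :
    #(Forb x θo ν ψ γ) ≤ Cardinal.lift.{u+1} γ.card + ℵ₀ := by
  classical
  set κ := Cardinal.lift.{u+1} γ.card + ℵ₀ with hκ
  have hκinf : ℵ₀ ≤ κ := le_add_self
  have hIio : #(Set.Iio γ) = Cardinal.lift.{u+1} γ.card := Cardinal.mk_Iio_ordinal γ
  have h1 : #(ψ '' Set.Iio γ) ≤ κ := by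
    refine mk_image_le.trans ?_
    rw [hIio]; exact self_le_add_right _ _
  set S : Set (Finset Ordinal.{u}) := {F : Finset Ordinal.{u} | ↑F ⊆ Set.Iio γ} with hS
  have hSle : #S ≤ κ := by
    have hinj : Function.Injective
        (fun F : S => (F.1.subtype (· ∈ Set.Iio γ) : Finset (Set.Iio γ))) := by
      intro F G h
      apply Subtype.ext
      have h2 := congrArg (Finset.map (Function.Embedding.subtype (· ∈ Set.Iio γ))) h
      rwa [Finset.subtype_map, Finset.subtype_map,
        Finset.filter_true_of_mem (fun a ha => F.2 ha),
        Finset.filter_true_of_mem (fun a ha => G.2 ha)] at h2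
    have h3 : #S ≤ #(Finset (Set.Iio γ)) := mk_le_of_injective hinj
    refine h3.trans ?_
    by_cases hinf : Infinite (Set.Iio γ)
    · rw [mk_finset_of_infinite, hIio]; exact self_le_add_right _ _
    · have : Finite (Set.Iio γ) := not_infinite_iff_finite.mp hinf
      have : Countable (Finset (Set.Iio γ)) := inferInstance
      exact mk_le_aleph0.trans le_add_self
  have h2 : #(⋃ F ∈ S,
      ⋃ g ∈ ν ((fun β => x (ψ β)) '' ((F : Finset Ordinal.{u}) : Set Ordinal.{u})), supp x θo g) ≤ κ := by
    refine (mk_biUnion_le _ S).trans ?_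
    have hsup : (⨆ F : S,
        #(⋃ g ∈ ν ((fun β => x (ψ β)) '' ((F : Finset Ordinal.{u}) : Set Ordinal.{u})),
          supp x θo g)) ≤ ℵ₀ := by
      refine ciSup_le' fun F => ?_
      have hcnt : (⋃ g ∈ ν ((fun β => x (ψ β)) '' ((F : Finset Ordinal.{u}) : Set Ordinal.{u})),
          supp x θo g).Countable :=
        Set.Countable.biUnion (hν _) fun g hg => hsupp _ g hg
      have := hcnt.to_subtype
      exact mk_le_aleph0
    calc #S * (⨆ F : S,
        #(⋃ g ∈ ν ((fun β => x (ψ β)) '' ((F : Finset Ordinal.{u}) : Set Ordinal.{u})),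
          supp x θo g)) ≤ κ * ℵ₀ := mul_le_mul' hSle hsup
      _ = κ := mul_aleph0_eq hκinf
  calc #(Forb x θo ν ψ γ) ≤ #(ψ '' Set.Iio γ) + #(⋃ F ∈ S,
      ⋃ g ∈ ν ((fun β => x (ψ β)) '' ((F : Finset Ordinal.{u}) : Set Ordinal.{u})), supp x θo g) :=
        mk_union_le _ _
    _ ≤ κ + κ := add_le_add h1 h2
    _ = κ := add_eq_self hκinf

/-- fresh ordinal below `θ.ord` avoiding a small set -/
theorem exists_fresh {θ : Cardinal.{u}} {S : Set Ordinal.{u}}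
    (hS : #S < Cardinal.lift.{u+1} θ) : ∃ ξ, ξ < θ.ord ∧ ξ ∉ S := by
  by_contra h
  push_neg at h
  have hsub : Set.Iio θ.ord ⊆ S := fun ξ hξ => h ξ hξ
  have := mk_le_mk_of_subset hsub
  rw [Cardinal.mk_Iio_ordinal, Cardinal.card_ord] at this
  exact (hS.not_ge this).elim

/-- recursion taking the least element of a stage-dependent set -/
noncomputable def recMin (B : (Ordinal.{u} → Ordinal.{u}) → Ordinal.{u} → Set Ordinal.{u}) :
    Ordinal.{u} → Ordinal.{u} :=
  lt_wf.fix fun γ ih => sInf (B (fun β => if h : β < γ then ih β h else 0) γ)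

theorem recMin_eq (B : (Ordinal.{u} → Ordinal.{u}) → Ordinal.{u} → Set Ordinal.{u})
    (hB : ∀ ψ ψ' γ, Set.EqOn ψ ψ' (Set.Iio γ) → B ψ γ = B ψ' γ) (γ : Ordinal.{u}) :
    recMin B γ = sInf (B (recMin B) γ) := by
  have h : recMin B γ
      = sInf (B (fun β => if h : β < γ then recMin B β else 0) γ) :=
    WellFounded.fix_eq _ _ γ
  exact h.trans (congrArg sInf (hB (fun β => if h : β < γ then recMin B β else 0)
    (recMin B) γ fun β hβ => dif_pos (Set.mem_Iio.mp hβ)))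

theorem recMin_mem (B : (Ordinal.{u} → Ordinal.{u}) → Ordinal.{u} → Set Ordinal.{u})
    (hB : ∀ ψ ψ' γ, Set.EqOn ψ ψ' (Set.Iio γ) → B ψ γ = B ψ' γ) (γ : Ordinal.{u})
    (hne : (B (recMin B) γ).Nonempty) : recMin B γ ∈ B (recMin B) γ := by
  rw [recMin_eq B hB γ]
  exact csInf_mem hne

/-- the key support-avoidance property -/
theorem support_avoid {x : Ordinal.{u} → X} {θo : Ordinal.{u}} {ν : Set X → Set (X →L[ℝ] ℝ)}
    {φ : Ordinal.{u} → Ordinal.{u}}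
    (hphi : ∀ γ < θo, φ γ < θo ∧ φ γ ∉ Forb x θo ν φ γ)
    {lam γ : Ordinal.{u}} (hle : lam ≤ γ) (hγ : γ < θo)
    {F : Finset Ordinal.{u}} (hF : ↑F ⊆ Set.Iio lam)
    {g : X →L[ℝ] ℝ} (hg : g ∈ ν ((fun β => x (φ β)) '' (F : Set Ordinal.{u}))) :
    g (x (φ γ)) = 0 := by
  by_contra hne
  obtain ⟨hlt, hforb⟩ := hphi γ hγ
  apply hforb
  refine Set.mem_union_right _ ?_
  refine Set.mem_biUnion (show F ∈ {F : Finset Ordinal.{u} | ↑F ⊆ Set.Iio γ} from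
    fun a ha => lt_of_lt_of_le (hF ha) hle) ?_
  exact Set.mem_biUnion hg ⟨hlt, hne⟩

theorem basic_of_good {x : Ordinal.{u} → X} {θo : Ordinal.{u}} {ν : Set X → Set (X →L[ℝ] ℝ)}
    {φ : Ordinal.{u} → Ordinal.{u}}
    (hν2 : ∀ s, ∀ g ∈ ν s, ‖g‖ ≤ 1)
    (hν3 : ∀ s : Set X, s.Finite → ∀ y ∈ Submodule.span ℝ s, ∀ ε > (0:ℝ), ∃ g ∈ ν s, ‖y‖ - ε < g y)
    (hphi : ∀ γ < θo, φ γ < θo ∧ φ γ ∉ Forb x θo ν φ γ)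
    (hxne : ∀ γ < θo, x (φ γ) ≠ 0) :
    IsBasicSeqWithConst (fun α => x (φ α)) θo 1 := by
  classical
  refine ⟨le_refl 1, fun α hα => hxne α hα, ?_⟩
  intro lam hlam y hy z hz
  rw [one_mul]
  refine le_of_forall_pos_le_add fun ε hε => ?_
  have hy' : y ∈ closure (↑(Submodule.span ℝ ((fun α => x (φ α)) '' {α | α < lam})) : Set X) := by
    rw [← Submodule.topologicalClosure_coe]
    exact hy
  obtain ⟨y', hy'span, hdist⟩ := Metric.mem_closure_iff.mp hy' (ε/3) (by positivity)
  obtain ⟨T, hT, hy'T⟩ := Submodule.mem_span_finite_of_mem_span hy'span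
  have hidx : ∀ t ∈ T, ∃ α, α < lam ∧ x (φ α) = t := by
    intro t ht
    obtain ⟨α, hα, rfl⟩ := hT ht
    exact ⟨α, hα, rfl⟩
  choose idx hidx1 hidx2 using hidx
  set F : Finset Ordinal.{u} := T.attach.image (fun t => idx t.1 t.2) with hFdef
  have hF : ↑F ⊆ Set.Iio lam := by
    intro a ha
    obtain ⟨t, -, rfl⟩ := Finset.mem_image.mp (Finset.mem_coe.mp ha)
    exact hidx1 t.1 t.2
  have hTF : (T : Set X) ⊆ (fun β => x (φ β)) '' (F : Set Ordinal.{u}) := by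
    intro t ht
    refine ⟨idx t ht, ?_, hidx2 t ht⟩
    exact Finset.mem_coe.mpr (Finset.mem_image.mpr ⟨⟨t, ht⟩, Finset.mem_attach _ _, rfl⟩)
  have hy'F : y' ∈ Submodule.span ℝ ((fun β => x (φ β)) '' (F : Set Ordinal.{u})) :=
    Submodule.span_mono hTF (by exact hy'T)
  obtain ⟨g, hg, hgy'⟩ := hν3 _ (F.finite_toSet.image _) y' hy'F (ε/3) (by positivity)
  have hgnorm : ‖g‖ ≤ 1 := hν2 _ g hg
  have hgz : g z = 0 := by
    have hker : closedSpan ((fun α => x (φ α)) '' {α | lam ≤ α ∧ α < θo}) ≤ LinearMap.ker (g : X →ₗ[ℝ] ℝ) := by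
      refine Submodule.topologicalClosure_minimal _ ?_ ?_
      · rw [Submodule.span_le]
        rintro v ⟨γ, ⟨hγ1, hγ2⟩, rfl⟩
        exact support_avoid hphi hγ1 hγ2 hF hg
      · exact ContinuousLinearMap.isClosed_ker g
    exact hker hz
  have e0 : ∀ w : X, |g w| ≤ ‖w‖ := by
    intro w
    calc |g w| = ‖g w‖ := rfl
      _ ≤ ‖g‖ * ‖w‖ := g.le_opNorm w
      _ ≤ 1 * ‖w‖ := mul_le_mul_of_nonneg_right hgnorm (norm_nonneg w)
      _ = ‖w‖ := one_mul _
  have e1 : g y' - g y ≤ ε/3 := by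
    have h2 : g y' - g y = g (y' - y) := by rw [map_sub]
    have h3 : ‖y' - y‖ < ε/3 := by rwa [← dist_eq_norm, dist_comm]
    nlinarith [abs_le.mp (e0 (y' - y))]
  have e2 : g y ≤ ‖y + z‖ := by
    have h2 : g (y + z) = g y := by rw [map_add, hgz, add_zero]
    have := (abs_le.mp (e0 (y + z))).2
    linarith [h2 ▸ this]
  have e3 : ‖y‖ ≤ ‖y'‖ + ε/3 := by
    have h1 : ‖y‖ ≤ ‖y'‖ + ‖y - y'‖ := by
      have hrw : y' + (y - y') = y := by abel
      calc ‖y‖ = ‖y' + (y - y')‖ := by rw [hrw]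
        _ ≤ ‖y'‖ + ‖y - y'‖ := norm_add_le _ _
    have h3 : ‖y - y'‖ < ε/3 := by rwa [← dist_eq_norm]
    linarith
  linarith

theorem key_norming {x : Ordinal.{u} → X} {θo : Ordinal.{u}}
    (hnorming : ∀ v : X, ‖v‖ = 1 → ∀ ε > (0:ℝ), ∃ g : X →L[ℝ] ℝ,
      {α : Ordinal.{u} | α < θo ∧ g (x α) ≠ 0}.Countable ∧ ‖g‖ ≤ 1 ∧ 1 - ε < g v)
    (v : X) (δ : ℝ) (hδ : 0 < δ) :
    ∃ g : X →L[ℝ] ℝ, (supp x θo g).Countable ∧ ‖g‖ ≤ 1 ∧ ‖v‖ - δ < g v := by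
  by_cases hv : v = 0
  · refine ⟨0, ?_, by simp, by simp [hv, hδ]⟩
    have : supp x θo 0 = ∅ := by
      ext α; simp [supp]
    rw [this]; exact countable_empty
  · have hvpos : (0:ℝ) < ‖v‖ := norm_pos_iff.mpr hv
    have hvne : ‖v‖ ≠ 0 := ne_of_gt hvpos
    set u : X := ‖v‖⁻¹ • v with hu
    have hun : ‖u‖ = 1 := by
      rw [hu, norm_smul, norm_inv, norm_norm, inv_mul_cancel₀ hvne]
    obtain ⟨g, hg1, hg2, hg3⟩ := hnorming u hun (δ / ‖v‖) (div_pos hδ hvpos)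
    refine ⟨g, hg1, hg2, ?_⟩
    have hgu : g u = ‖v‖⁻¹ * g v := by
      rw [hu, map_smul, _root_.smul_eq_mul]
    rw [hgu] at hg3
    have h4 : ‖v‖ * (1 - δ / ‖v‖) < ‖v‖ * (‖v‖⁻¹ * g v) :=
      (mul_lt_mul_iff_right₀ hvpos).mpr hg3
    have h5 : ‖v‖ * (1 - δ / ‖v‖) = ‖v‖ - δ := by field_simp
    have h6 : ‖v‖ * (‖v‖⁻¹ * g v) = g v := by field_simp
    linarith

theorem exists_nu {x : Ordinal.{u} → X} {θo : Ordinal.{u}}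
    (hnorming : ∀ v : X, ‖v‖ = 1 → ∀ ε > (0:ℝ), ∃ g : X →L[ℝ] ℝ,
      {α : Ordinal.{u} | α < θo ∧ g (x α) ≠ 0}.Countable ∧ ‖g‖ ≤ 1 ∧ 1 - ε < g v) :
    ∃ ν : Set X → Set (X →L[ℝ] ℝ), ∀ s : Set X,
      (ν s).Countable ∧
      (∀ g ∈ ν s, ‖g‖ ≤ 1 ∧ (supp x θo g).Countable) ∧
      (s.Finite → ∀ y ∈ Submodule.span ℝ s, ∀ ε > (0:ℝ), ∃ g ∈ ν s, ‖y‖ - ε < g y) := by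
  classical
  choose K hK1 hK2 hK3 using fun (v : X) (n : ℕ) =>
    key_norming hnorming v (1/(n+1:ℝ)) (by positivity)
  have hD : ∀ s : Set X, ∃ D : Set X, D.Countable ∧
      (s.Finite → (↑(Submodule.span ℝ s) : Set X) ⊆ closure D) := by
    intro s
    by_cases hf : s.Finite
    · have hsep : TopologicalSpace.IsSeparable (↑(Submodule.span ℝ s) : Set X) :=
        (hf.countable.isSeparable).span
      obtain ⟨D, hDc, hDsub⟩ := hsep
      exact ⟨D, hDc, fun _ => hDsub⟩
    · exact ⟨∅, countable_empty, fun h => absurd h hf⟩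
  choose D hD1 hD2 using hD
  refine ⟨fun s => insert 0 ((fun p : X × ℕ => K p.1 p.2) '' (D s ×ˢ (Set.univ : Set ℕ))), ?_⟩
  intro s
  refine ⟨?_, ?_, ?_⟩
  · exact (((hD1 s).prod Set.countable_univ).image _).insert 0
  · rintro g (rfl | ⟨⟨v, n⟩, -, rfl⟩)
    · constructor
      · simp
      · have : supp x θo 0 = ∅ := by ext α; simp [supp]
        rw [this]; exact countable_empty
    · exact ⟨hK2 v n, hK1 v n⟩
  · intro hfin y hy ε hε
    have hyc : y ∈ closure (D s) := hD2 s hfin hy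
    obtain ⟨v, hvD, hvdist⟩ := Metric.mem_closure_iff.mp hyc (ε/3) (by positivity)
    obtain ⟨n, hn⟩ := exists_nat_one_div_lt (show (0:ℝ) < ε/3 by positivity)
    refine ⟨K v n, Set.mem_insert_of_mem _ ⟨(v, n), ⟨hvD, Set.mem_univ _⟩, rfl⟩, ?_⟩
    have habs : |K v n (v - y)| ≤ ‖v - y‖ := by
      calc |K v n (v - y)| = ‖K v n (v - y)‖ := rfl
        _ ≤ ‖K v n‖ * ‖v - y‖ := (K v n).le_opNorm _
        _ ≤ 1 * ‖v - y‖ := mul_le_mul_of_nonneg_right (hK2 v n) (norm_nonneg _)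
        _ = ‖v - y‖ := one_mul _
    have hvy : ‖v - y‖ < ε/3 := by rw [← dist_eq_norm, dist_comm]; exact hvdist
    have hyv : ‖y‖ ≤ ‖v‖ + ‖v - y‖ := by
      have hrw : v + (y - v) = y := by abel
      calc ‖y‖ = ‖v + (y - v)‖ := by rw [hrw]
        _ ≤ ‖v‖ + ‖y - v‖ := norm_add_le _ _
        _ = ‖v‖ + ‖v - y‖ := by rw [norm_sub_rev]
    have hmap : K v n (v - y) = K v n v - K v n y := map_sub _ _ _
    have hKv := hK3 v n
    have habs' := abs_le.mp habs
    linarith [habs'.1, habs'.2, hn]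

end Stmt15Aux

open Stmt15Aux

theorem stmt15 {X : Type u} [NormedAddCommGroup X] [NormedSpace ℝ X] [CompleteSpace X]
    (θ : Cardinal.{u}) (hunc : ℵ₀ < θ)
    (x : Ordinal.{u} → X) (f : Ordinal.{u} → (X →L[ℝ] ℝ))
    (hbiorth : ∀ α < θ.ord, ∀ β < θ.ord, f α (x β) = if α = β then 1 else 0)
    (hgen : closedSpan (x '' Set.Iio θ.ord) = ⊤)
    (hsep : ∀ v : X, v ≠ 0 → ∃ α < θ.ord, f α v ≠ 0)
    -- the M-basis is countably 1-norming: the functionals with countable support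
    -- on the basis form a 1-norming subspace
    (hnorming : ∀ v : X, ‖v‖ = 1 → ∀ ε > (0:ℝ), ∃ g : X →L[ℝ] ℝ,
      {α : Ordinal.{u} | α < θ.ord ∧ g (x α) ≠ 0}.Countable ∧ ‖g‖ ≤ 1 ∧ 1 - ε < g v) :
    (∃ φ : Ordinal.{u} → Ordinal.{u}, Set.InjOn φ (Set.Iio θ.ord) ∧
      (∀ α < θ.ord, φ α < θ.ord) ∧
      IsBasicSeqWithConst (fun α => x (φ α)) θ.ord 1) ∧
    (θ.IsRegular →
      ∃ φ : Ordinal.{u} → Ordinal.{u}, StrictMonoOn φ (Set.Iio θ.ord) ∧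
        (∀ α < θ.ord, φ α < θ.ord) ∧
        IsBasicSeqWithConst (fun α => x (φ α)) θ.ord 1) ∧
    -- in particular, `X` (a nonseparable Plichko space) contains a monotone
    -- basic sequence of length `ω₁`
    (∃ y : Ordinal.{u} → X, IsBasicSeqWithConst y (Cardinal.aleph 1).ord 1) := by
  classical
  obtain ⟨ν, hν⟩ := exists_nu (x := x) (θo := θ.ord) hnorming
  have hνc : ∀ s, (ν s).Countable := fun s => (hν s).1
  have hν2 : ∀ s, ∀ g ∈ ν s, ‖g‖ ≤ 1 := fun s g hg => ((hν s).2.1 g hg).1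
  have hνsupp : ∀ s, ∀ g ∈ ν s, (supp x θ.ord g).Countable :=
    fun s g hg => ((hν s).2.1 g hg).2
  have hν3 : ∀ s : Set X, s.Finite → ∀ y ∈ Submodule.span ℝ s, ∀ ε > (0:ℝ),
      ∃ g ∈ ν s, ‖y‖ - ε < g y := fun s => (hν s).2.2
  -- small cardinality of Forb
  have hliftθ : ℵ₀ ≤ Cardinal.lift.{u+1} θ := Cardinal.aleph0_le_lift.2 hunc.le
  have hsmall : ∀ (ψ : Ordinal.{u} → Ordinal.{u}) (γ : Ordinal.{u}), γ < θ.ord →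
      #(Forb x θ.ord ν ψ γ) < Cardinal.lift.{u+1} θ := by
    intro ψ γ hγ
    refine (mk_Forb_le hνc hνsupp ψ γ).trans_lt ?_
    refine Cardinal.add_lt_of_lt hliftθ ?_ ?_
    · exact Cardinal.lift_lt.2 (Cardinal.lt_ord.mp hγ)
    · exact Cardinal.aleph0_lt_lift.2 hunc
  -- nonzero basis vectors
  have hxne0 : ∀ ξ, ξ < θ.ord → x ξ ≠ 0 := by
    intro ξ hξ h0
    have hb := hbiorth ξ hξ ξ hξ
    rw [if_pos rfl, h0, map_zero] at hb
    exact one_ne_zero hb.symm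
  -- Part 1 : injective φ
  set B1 : (Ordinal.{u} → Ordinal.{u}) → Ordinal.{u} → Set Ordinal.{u} :=
    fun ψ γ => {ξ | ξ < θ.ord ∧ ξ ∉ Forb x θ.ord ν ψ γ} with hB1def
  have hB1 : ∀ ψ ψ' γ, Set.EqOn ψ ψ' (Set.Iio γ) → B1 ψ γ = B1 ψ' γ := by
    intro ψ ψ' γ h
    simp only [hB1def, Forb_congr h]
  set φ1 : Ordinal.{u} → Ordinal.{u} := recMin B1 with hφ1def
  have good1 : ∀ γ < θ.ord, φ1 γ < θ.ord ∧ φ1 γ ∉ Forb x θ.ord ν φ1 γ := by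
    intro γ hγ
    have hne : (B1 φ1 γ).Nonempty := by
      obtain ⟨ξ, hξ1, hξ2⟩ := exists_fresh (hsmall φ1 γ hγ)
      exact ⟨ξ, hξ1, hξ2⟩
    exact recMin_mem B1 hB1 γ hne
  have hrange1 : ∀ α < θ.ord, φ1 α < θ.ord := fun α hα => (good1 α hα).1
  have hxne1 : ∀ γ < θ.ord, x (φ1 γ) ≠ 0 := fun γ hγ => hxne0 _ (hrange1 γ hγ)
  have hbasic1 : IsBasicSeqWithConst (fun α => x (φ1 α)) θ.ord 1 :=
    basic_of_good hν2 hν3 good1 hxne1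
  have hinj1 : Set.InjOn φ1 (Set.Iio θ.ord) := by
    intro a ha b hb hab
    by_contra hne
    rcases lt_or_gt_of_ne hne with h | h
    · exact (good1 b hb).2 (Set.mem_union_left _ ⟨a, h, hab⟩)
    · exact (good1 a ha).2 (Set.mem_union_left _ ⟨b, h, hab.symm⟩)
  refine ⟨⟨φ1, hinj1, hrange1, hbasic1⟩, ?_, ?_⟩
  · -- Part 2 : regular case, strictly increasing φ
    intro hreg
    set B2 : (Ordinal.{u} → Ordinal.{u}) → Ordinal.{u} → Set Ordinal.{u} :=
      fun ψ γ => {ξ | ξ < θ.ord ∧ ξ ∉ Forb x θ.ord ν ψ γ ∧ ∀ β < γ, ψ β < ξ} with hB2def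
    have hB2 : ∀ ψ ψ' γ, Set.EqOn ψ ψ' (Set.Iio γ) → B2 ψ γ = B2 ψ' γ := by
      intro ψ ψ' γ h
      simp only [hB2def]
      ext ξ
      simp only [Set.mem_setOf_eq]
      rw [Forb_congr h]
      refine and_congr_right fun _ => and_congr_right fun _ => ?_
      exact forall_congr' fun β => imp_congr_right fun hβ => by rw [h hβ]
    set φ2 : Ordinal.{u} → Ordinal.{u} := recMin B2 with hφ2def
    have good2 : ∀ γ, γ < θ.ord → φ2 γ ∈ B2 φ2 γ := by
      intro γ
      induction γ using WellFounded.induction lt_wf with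
      | _ γ IH => ?_
      intro hγ
      have hprev : ∀ β (hβ : β < γ), φ2 β < θ.ord :=
        fun β hβ => (IH β hβ (hβ.trans hγ)).1
      have hsb : Ordinal.bsup.{u,u} γ (fun β _ => φ2 β) < θ.ord :=
        Cardinal.bsup_lt_ord_of_isRegular hreg (Cardinal.lt_ord.mp hγ) hprev
      set sb := Ordinal.bsup.{u,u} γ (fun β _ => φ2 β) with hsbdef
      have hsucc : Order.succ sb < θ.ord := (Cardinal.isSuccLimit_ord hunc.le).succ_lt hsb
      have hcard : #((Forb x θ.ord ν φ2 γ ∪ Set.Iic sb : Set Ordinal.{u}))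
          < Cardinal.lift.{u+1} θ := by
        refine (mk_union_le _ _).trans_lt ?_
        refine Cardinal.add_lt_of_lt hliftθ (hsmall φ2 γ hγ) ?_
        have hsubset : Set.Iic sb ⊆ Set.Iio (Order.succ sb) := by
          intro a ha
          exact Order.lt_succ_of_le (Set.mem_Iic.mp ha)
        refine (mk_le_mk_of_subset hsubset).trans_lt ?_
        rw [Cardinal.mk_Iio_ordinal]
        exact Cardinal.lift_lt.2 (Cardinal.lt_ord.mp hsucc)
      obtain ⟨ξ, hξ1, hξ2⟩ := exists_fresh hcard
      have hne : (B2 φ2 γ).Nonempty := by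
        refine ⟨ξ, hξ1, fun hmem => hξ2 (Set.mem_union_left _ hmem), ?_⟩
        intro β hβ
        have h1 : φ2 β ≤ sb := Ordinal.le_bsup (fun β _ => φ2 β) β hβ
        have h2 : sb < ξ := by
          by_contra hcon
          push_neg at hcon
          exact hξ2 (Set.mem_union_right _ hcon)
        exact h1.trans_lt h2
      exact recMin_mem B2 hB2 γ hne
    have hrange2 : ∀ α < θ.ord, φ2 α < θ.ord := fun α hα => (good2 α hα).1
    have good2' : ∀ γ < θ.ord, φ2 γ < θ.ord ∧ φ2 γ ∉ Forb x θ.ord ν φ2 γ :=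
      fun γ hγ => ⟨(good2 γ hγ).1, (good2 γ hγ).2.1⟩
    have hxne2 : ∀ γ < θ.ord, x (φ2 γ) ≠ 0 := fun γ hγ => hxne0 _ (hrange2 γ hγ)
    have hmono : StrictMonoOn φ2 (Set.Iio θ.ord) := by
      intro a ha b hb hab
      exact (good2 b hb).2.2 a hab
    exact ⟨φ2, hmono, hrange2, basic_of_good hν2 hν3 good2' hxne2⟩
  · -- Part 3 : sequence of length ω₁
    have hord : (Cardinal.aleph 1).ord ≤ θ.ord := by
      rw [Cardinal.ord_le_ord, ← Cardinal.succ_aleph0]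
      exact Order.succ_le_of_lt hunc
    obtain ⟨hc, hnz, hmain⟩ := hbasic1
    refine ⟨fun α => x (φ1 α), hc, fun α hα => hnz α (hα.trans_le hord), ?_⟩
    intro lam hlam y hy z hz
    refine hmain lam (hlam.trans_le hord) y hy z ?_
    have hsub : (fun α => x (φ1 α)) '' {α | lam ≤ α ∧ α < (Cardinal.aleph 1).ord}
        ⊆ (fun α => x (φ1 α)) '' {α | lam ≤ α ∧ α < θ.ord} :=
      Set.image_mono fun α hα => ⟨hα.1, hα.2.trans_le hord⟩
    exact Submodule.topologicalClosure_mono (Submodule.span_mono hsub) hz
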